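/- Let a be a real number with |a| < 1. Then there exist constants B > 0 and C > 0 (depending only on a) such that for every k ∈ ℕ and all complex numbers λ_1, …, λ_k, the Hermitian sum Σ_{i,j=1}^{k} λ_i · conj(λ_j) · a^{|i−j|} is a real number and B·Σ_{i=1}^{k} |λ_i|² ≤ Σ_{i,j=1}^{k} λ_i · conj(λ_j) · a^{|i−j|} ≤ C·Σ_{i=1}^{k} |λ_i|². -/

import Mathlib

noncomputable section

open scoped ComplexInnerProductSpace

namespace UCoxMasa

/-- The universal Coxeter matrix on `Fin L`: all off-diagonal entries are `0` (representing ∞). -/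
def Mat (L : ℕ) : CoxeterMatrix (Fin L) where
  M := fun i j => if i = j then 1 else 0
  isSymm := by
    ext i j
    by_cases h : i = j <;> simp [Matrix.transpose, h, eq_comm]
  diagonal := fun i => by simp
  off_diagonal := fun i j h => by simp [h]

/-- The universal Coxeter group on `L` generators: free product of `L` copies of `ℤ/2ℤ`. -/
abbrev W (L : ℕ) : Type := (Mat L).Group

/-- The distinguished Coxeter system of `W L`. -/
def cs (L : ℕ) : CoxeterSystem (Mat L) (W L) := CoxeterMatrix.toCoxeterSystem (Mat L)

/-- The simple reflection associated to `i : Fin L`. -/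
def σ {L : ℕ} (i : Fin L) : W L := (cs L).simple i

/-- Word length on `W L` with respect to the generating set of simple reflections. -/
def len {L : ℕ} (w : W L) : ℕ := (cs L).length w

/-- The Hilbert space `ℓ²(W)`. -/
abbrev H (L : ℕ) : Type := lp (fun _ : W L => ℂ) 2

/-- The standard orthonormal basis vector `δ_w` of `ℓ²(W)`. -/
def δ {L : ℕ} (w : W L) : H L :=
  letI := Classical.decEq (W L)
  lp.single 2 w 1

/-- `V l`: the linear span of `{δ_w : ℓ(w) = l}`. -/
def V (L : ℕ) (l : ℕ) : Submodule ℂ (H L) :=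
  Submodule.span ℂ {x : H L | ∃ w : W L, len w = l ∧ x = δ w}

/-- `S_l`: the linear span of `q_l(h V_{l-1}) ∪ q_l(R_h V_{l-1})`,
given the projections `Q`, the operator `h` and the right operator `Rh`. -/
def Sl (L : ℕ) (Q : ℕ → (H L →L[ℂ] H L)) (h Rh : H L →L[ℂ] H L) (l : ℕ) :
    Submodule ℂ (H L) :=
  Submodule.span ℂ
    ({x : H L | ∃ y ∈ V L (l - 1), x = Q l (h y)} ∪
      {x : H L | ∃ y ∈ V L (l - 1), x = Q l (Rh y)})

end UCoxMasa


namespace UCoxMasa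

def Xv (a : ℝ) {k : ℕ} (lam : Fin k → ℂ) (n : ℕ) : ℂ :=
  ∑ j : Fin k, if n ≤ j.1 then (a : ℂ) ^ (j.1 - n) * lam j else 0

lemma Xv_zero_of_ge (a : ℝ) {k : ℕ} (lam : Fin k → ℂ) {n : ℕ} (hn : k ≤ n) :
    Xv a lam n = 0 := by
  unfold Xv
  apply Finset.sum_eq_zero
  intro j _
  have : ¬ n ≤ j.1 := by omega
  simp [this]

lemma Xv_succ (a : ℝ) {k : ℕ} (lam : Fin (k + 1) → ℂ) (n : ℕ) :
    Xv a lam (n + 1) = Xv a (fun i => lam i.succ) n := by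
  unfold Xv
  rw [Fin.sum_univ_succ]
  simp only [Fin.val_zero, Fin.val_succ]
  have h0 : ¬ n + 1 ≤ 0 := by omega
  simp only [h0, if_false, zero_add]
  apply Finset.sum_congr rfl
  intro j _
  have : j.1 + 1 - (n + 1) = j.1 - n := by omega
  simp [this]

lemma norm_sq_cast (z : ℂ) : ((‖z‖^2 : ℝ) : ℂ) = z * (starRingEnd ℂ) z := by
  rw [Complex.mul_conj]
  norm_cast
  exact (Complex.sq_norm z).symm ▸ rfl

lemma key (a : ℝ) : ∀ (k : ℕ) (lam : Fin k → ℂ),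
    (∑ i : Fin k, ∑ j : Fin k,
      lam i * (starRingEnd ℂ) (lam j) *
        ((a ^ ((i : ℤ) - (j : ℤ)).natAbs : ℝ) : ℂ)) =
    ((∑ n ∈ Finset.range k,
      (if n = 0 then 1 else 1 - a ^ 2) * ‖Xv a lam n‖ ^ 2 : ℝ) : ℂ) := by
  intro k
  induction k with
  | zero => intro lam; simp
  | succ k ih =>
    intro lam
    set μ : Fin k → ℂ := fun i => lam i.succ with hμ
    set y : ℂ := ∑ j : Fin k, (a : ℂ) ^ (j.1 + 1) * μ j with hy
    have hX0 : Xv a lam 0 = lam 0 + y := by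
      unfold Xv
      rw [Fin.sum_univ_succ]
      simp [hy, hμ]
    have hyμ : y = (a : ℂ) * Xv a μ 0 := by
      rw [hy]
      unfold Xv
      rw [Finset.mul_sum]
      apply Finset.sum_congr rfl
      intro j _
      simp [pow_succ, mul_comm, mul_assoc, mul_left_comm]
    -- LHS expansion
    have hLHS : (∑ i : Fin (k+1), ∑ j : Fin (k+1),
        lam i * (starRingEnd ℂ) (lam j) *
          ((a ^ ((i : ℤ) - (j : ℤ)).natAbs : ℝ) : ℂ)) =
        lam 0 * (starRingEnd ℂ) (lam 0) + lam 0 * (starRingEnd ℂ) y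
          + y * (starRingEnd ℂ) (lam 0)
          + (∑ i : Fin k, ∑ j : Fin k,
              μ i * (starRingEnd ℂ) (μ j) *
                ((a ^ ((i : ℤ) - (j : ℤ)).natAbs : ℝ) : ℂ)) := by
      rw [Fin.sum_univ_succ]
      have h1 : (∑ j : Fin (k+1), lam 0 * (starRingEnd ℂ) (lam j) *
          ((a ^ (((0 : Fin (k+1)) : ℤ) - (j : ℤ)).natAbs : ℝ) : ℂ)) =
          lam 0 * (starRingEnd ℂ) (lam 0) + lam 0 * (starRingEnd ℂ) y := by
        rw [Fin.sum_univ_succ]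
        congr 1
        · simp
        · rw [hy, map_sum, Finset.mul_sum]
          apply Finset.sum_congr rfl
          intro j _
          have he : ((((0 : Fin (k+1)) : ℤ) - ((j.succ : Fin (k+1)) : ℤ)).natAbs) = j.1 + 1 := by
            simp [Fin.val_succ]; omega
          rw [he]
          have : (starRingEnd ℂ) ((a:ℂ) ^ (j.1+1) * μ j)
              = (a:ℂ)^(j.1+1) * (starRingEnd ℂ) (μ j) := by
            simp [map_mul, map_pow, Complex.conj_ofReal]
          rw [this]
          push_cast
          ring
      rw [h1]
      have h2 : ∀ i : Fin k, (∑ j : Fin (k+1), lam i.succ * (starRingEnd ℂ) (lam j) *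
          ((a ^ (((i.succ : Fin (k+1)) : ℤ) - (j : ℤ)).natAbs : ℝ) : ℂ)) =
          μ i * (starRingEnd ℂ) (lam 0) * ((a:ℝ)^(i.1+1) : ℂ)
          + ∑ j : Fin k, μ i * (starRingEnd ℂ) (μ j) *
              ((a ^ ((i : ℤ) - (j : ℤ)).natAbs : ℝ) : ℂ) := by
        intro i
        rw [Fin.sum_univ_succ]
        congr 1
        · have he : (((i.succ : Fin (k+1)) : ℤ) - ((0 : Fin (k+1)) : ℤ)).natAbs = i.1 + 1 := by
            simp [Fin.val_succ]; omega
          rw [he]; push_cast; ring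
        · apply Finset.sum_congr rfl
          intro j _
          have he : ((((i.succ : Fin (k+1)) : ℤ) - ((j.succ : Fin (k+1)) : ℤ)).natAbs) =
              (((i : ℤ)) - ((j : ℤ))).natAbs := by
            simp [Fin.val_succ]
          rw [he]
      rw [Finset.sum_congr rfl (fun i _ => h2 i), Finset.sum_add_distrib]
      have h3 : (∑ i : Fin k, μ i * (starRingEnd ℂ) (lam 0) * ((a:ℝ)^(i.1+1) : ℂ))
          = y * (starRingEnd ℂ) (lam 0) := by
        rw [hy, Finset.sum_mul]
        apply Finset.sum_congr rfl
        intro j _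
        push_cast
        ring
      rw [h3]
      ring
    rw [hLHS, ih μ]
    -- RHS expansion
    have hR : (∑ n ∈ Finset.range (k+1),
        (if n = 0 then 1 else 1 - a ^ 2) * ‖Xv a lam n‖ ^ 2)
        = ‖lam 0 + y‖^2 + (1 - a^2) * ∑ n ∈ Finset.range k, ‖Xv a μ n‖^2 := by
      rw [Finset.sum_range_succ']
      have hterm : ∀ n ∈ Finset.range k,
          (if n + 1 = 0 then 1 else 1 - a^2) * ‖Xv a lam (n+1)‖^2
          = (1 - a^2) * ‖Xv a μ n‖^2 := by
        intro n _
        rw [Xv_succ]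
        simp
        exact Or.inl rfl
      rw [Finset.sum_congr rfl hterm, hX0, if_pos rfl, Finset.mul_sum]
      ring
    have hsplit : (∑ n ∈ Finset.range k,
        (if n = 0 then 1 else 1 - a ^ 2) * ‖Xv a μ n‖ ^ 2)
        = (1 - a^2) * (∑ n ∈ Finset.range k, ‖Xv a μ n‖^2) + a^2 * ‖Xv a μ 0‖^2 := by
      rcases Nat.eq_zero_or_pos k with hk | hk
      · subst hk
        simp [Xv_zero_of_ge a μ (le_refl 0)]
      · have h01 : ∀ n ∈ Finset.range k, (if n = 0 then 1 else 1 - a ^ 2) * ‖Xv a μ n‖ ^ 2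
            = (1 - a^2) * ‖Xv a μ n‖^2 + (if n = 0 then a^2 * ‖Xv a μ 0‖^2 else 0) := by
          intro n _
          by_cases hn : n = 0 <;> simp [hn] <;> ring
        rw [Finset.sum_congr rfl h01, Finset.sum_add_distrib, Finset.mul_sum,
          Finset.sum_ite_eq' (Finset.range k) 0]
        simp [Finset.mem_range.mpr hk]
    rw [hsplit, hR]
    have hay : a^2 * ‖Xv a μ 0‖^2 = ‖y‖^2 := by
      rw [hyμ, norm_mul, mul_pow, Complex.norm_real, Real.norm_eq_abs, sq_abs]
    rw [hay]
    have e1 : ((‖y‖^2 : ℝ) : ℂ) = y * (starRingEnd ℂ) y := norm_sq_cast y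
    have e2 : ((‖lam 0 + y‖^2 : ℝ) : ℂ) = (lam 0 + y) * (starRingEnd ℂ) (lam 0 + y) :=
      norm_sq_cast _
    simp only [Complex.ofReal_add, Complex.ofReal_mul, Complex.ofReal_sub,
      Complex.ofReal_one, Complex.ofReal_pow, e1, e2, map_add]
    ring

lemma geom_bound {r : ℝ} (h0 : 0 ≤ r) (h1 : r < 1) (k : ℕ) :
    ∑ t ∈ Finset.range k, r ^ t ≤ (1 - r)⁻¹ := by
  have hne : r ≠ 1 := ne_of_lt h1
  rw [geom_sum_eq hne]
  rw [div_le_iff_of_neg (by linarith : r - 1 < 0)]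
  have : r ^ k ≥ 0 := pow_nonneg h0 k
  have h2 : (1 - r)⁻¹ ≥ 0 := inv_nonneg.mpr (by linarith)
  have h3 : (1 - r)⁻¹ * (1 - r) = 1 := inv_mul_cancel₀ (by linarith)
  nlinarith

lemma rowsum {a : ℝ} (ha : |a| < 1) (k : ℕ) (i : ℕ) :
    ∑ j : Fin k, (if i ≤ j.1 then |a| ^ (j.1 - i) else 0) ≤ (1 - |a|)⁻¹ := by
  rw [Fin.sum_univ_eq_sum_range (fun n => if i ≤ n then |a| ^ (n - i) else 0) k]
  rw [← Finset.sum_filter]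
  have hfilter : (Finset.range k).filter (fun n => i ≤ n) = Finset.Ico i k := by
    ext n
    simp [Finset.mem_filter, Finset.mem_range, Finset.mem_Ico]
    omega
  rw [hfilter, Finset.sum_Ico_eq_sum_range]
  have : ∀ t ∈ Finset.range (k - i), |a| ^ (i + t - i) = |a| ^ t := by
    intro t _
    congr 1
    omega
  rw [Finset.sum_congr rfl this]
  exact geom_bound (abs_nonneg a) ha _

lemma colsum {a : ℝ} (ha : |a| < 1) (k : ℕ) (j : Fin k) :
    ∑ n ∈ Finset.range k, (if n ≤ j.1 then |a| ^ (j.1 - n) else 0) ≤ (1 - |a|)⁻¹ := by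
  rw [← Finset.sum_filter]
  have hfilter : (Finset.range k).filter (fun n => n ≤ j.1) = Finset.range (j.1 + 1) := by
    ext n
    simp [Finset.mem_filter, Finset.mem_range]
    omega
  rw [hfilter]
  have hrefl := Finset.sum_range_reflect (fun t => |a| ^ t) (j.1 + 1)
  have : ∑ n ∈ Finset.range (j.1 + 1), |a| ^ (j.1 - n)
      = ∑ t ∈ Finset.range (j.1 + 1), |a| ^ t := by
    rw [← hrefl]
    apply Finset.sum_congr rfl
    intro n hn
    simp only [Finset.mem_range] at hn
    congr 1
  rw [this]
  exact geom_bound (abs_nonneg a) ha _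

lemma xnorm_sq_le {a : ℝ} (ha : |a| < 1) {k : ℕ} (lam : Fin k → ℂ) (n : ℕ) :
    ‖Xv a lam n‖ ^ 2 ≤
      (1 - |a|)⁻¹ * ∑ j : Fin k, (if n ≤ j.1 then |a| ^ (j.1 - n) * ‖lam j‖ ^ 2 else 0) := by
  set w : Fin k → ℝ := fun j => if n ≤ j.1 then |a| ^ (j.1 - n) else 0 with hw
  have hwn : ∀ j, 0 ≤ w j := by
    intro j
    rw [hw]
    dsimp only
    split
    · positivity
    · exact le_refl 0
  have h1 : ‖Xv a lam n‖ ≤ ∑ j : Fin k, w j * ‖lam j‖ := by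
    refine (norm_sum_le _ _).trans_eq ?_
    apply Finset.sum_congr rfl
    intro j _
    rw [hw]
    dsimp only
    split
    · rw [norm_mul, norm_pow, Complex.norm_real, Real.norm_eq_abs]
    · simp
  have h2 : (∑ j : Fin k, w j * ‖lam j‖) ^ 2 ≤
      (∑ j : Fin k, w j) * ∑ j : Fin k, w j * ‖lam j‖ ^ 2 := by
    apply Finset.sum_sq_le_sum_mul_sum_of_sq_eq_mul
    · intro i _; exact hwn i
    · intro i _; exact mul_nonneg (hwn i) (sq_nonneg _)
    · intro i _; ring
  have h3 : ‖Xv a lam n‖ ^ 2 ≤ (∑ j : Fin k, w j) * ∑ j : Fin k, w j * ‖lam j‖ ^ 2 := by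
    refine le_trans ?_ h2
    apply pow_le_pow_left₀ (norm_nonneg _) h1
  refine h3.trans ?_
  have hsum : ∑ j : Fin k, w j ≤ (1 - |a|)⁻¹ := rowsum ha k n
  have hnn : 0 ≤ ∑ j : Fin k, w j * ‖lam j‖ ^ 2 :=
    Finset.sum_nonneg fun j _ => mul_nonneg (hwn j) (sq_nonneg _)
  have heq : ∑ j : Fin k, w j * ‖lam j‖ ^ 2
      = ∑ j : Fin k, (if n ≤ j.1 then |a| ^ (j.1 - n) * ‖lam j‖ ^ 2 else 0) := by
    apply Finset.sum_congr rfl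
    intro j _
    rw [hw]
    dsimp only
    split <;> simp
  rw [← heq]
  exact mul_le_mul_of_nonneg_right hsum hnn

lemma upper {a : ℝ} (ha : |a| < 1) {k : ℕ} (lam : Fin k → ℂ) :
    ∑ n ∈ Finset.range k, ‖Xv a lam n‖ ^ 2 ≤
      (1 - |a|)⁻¹ ^ 2 * ∑ j : Fin k, ‖lam j‖ ^ 2 := by
  have h1 : ∑ n ∈ Finset.range k, ‖Xv a lam n‖ ^ 2 ≤
      (1 - |a|)⁻¹ * ∑ n ∈ Finset.range k,
        ∑ j : Fin k, (if n ≤ j.1 then |a| ^ (j.1 - n) * ‖lam j‖ ^ 2 else 0) := by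
    rw [Finset.mul_sum]
    exact Finset.sum_le_sum fun n _ => xnorm_sq_le ha lam n
  refine h1.trans ?_
  have hinv : (0:ℝ) ≤ (1 - |a|)⁻¹ := inv_nonneg.mpr (by linarith [abs_nonneg a])
  have h2 : ∑ n ∈ Finset.range k,
      ∑ j : Fin k, (if n ≤ j.1 then |a| ^ (j.1 - n) * ‖lam j‖ ^ 2 else 0) ≤
      (1 - |a|)⁻¹ * ∑ j : Fin k, ‖lam j‖ ^ 2 := by
    rw [Finset.sum_comm, Finset.mul_sum]
    apply Finset.sum_le_sum
    intro j _
    have : ∑ n ∈ Finset.range k, (if n ≤ j.1 then |a| ^ (j.1 - n) * ‖lam j‖ ^ 2 else 0)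
        = (∑ n ∈ Finset.range k, (if n ≤ j.1 then |a| ^ (j.1 - n) else 0)) * ‖lam j‖ ^ 2 := by
      rw [Finset.sum_mul]
      apply Finset.sum_congr rfl
      intro n _
      split <;> simp
    rw [this]
    exact mul_le_mul_of_nonneg_right (colsum ha k j) (sq_nonneg _)
  calc (1 - |a|)⁻¹ * ∑ n ∈ Finset.range k,
      ∑ j : Fin k, (if n ≤ j.1 then |a| ^ (j.1 - n) * ‖lam j‖ ^ 2 else 0)
      ≤ (1 - |a|)⁻¹ * ((1 - |a|)⁻¹ * ∑ j : Fin k, ‖lam j‖ ^ 2) :=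
        mul_le_mul_of_nonneg_left h2 hinv
    _ = (1 - |a|)⁻¹ ^ 2 * ∑ j : Fin k, ‖lam j‖ ^ 2 := by ring

lemma lam_eq {a : ℝ} {k : ℕ} (lam : Fin k → ℂ) (i : Fin k) :
    lam i = Xv a lam i.1 - (a : ℂ) * Xv a lam (i.1 + 1) := by
  unfold Xv
  rw [Finset.mul_sum, ← Finset.sum_sub_distrib]
  have : ∀ j : Fin k, ((if i.1 ≤ j.1 then (a:ℂ) ^ (j.1 - i.1) * lam j else 0)
      - (a:ℂ) * (if i.1 + 1 ≤ j.1 then (a:ℂ) ^ (j.1 - (i.1+1)) * lam j else 0))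
      = if j = i then lam j else 0 := by
    intro j
    rcases lt_trichotomy j.1 i.1 with h | h | h
    · have h1 : ¬ i.1 ≤ j.1 := by omega
      have h2 : ¬ i.1 + 1 ≤ j.1 := by omega
      have h3 : ¬ j = i := fun he => by subst he; omega
      simp [h1, h2, h3]
    · have h1 : i.1 ≤ j.1 := h.ge
      have h2 : ¬ i.1 + 1 ≤ j.1 := by omega
      have h3 : j = i := Fin.ext h
      have h4 : j.1 - i.1 = 0 := by omega
      simp [h1, h2, h3, h4]
    · have h1 : i.1 ≤ j.1 := by omega
      have h2 : i.1 + 1 ≤ j.1 := h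
      have h3 : ¬ j = i := fun he => by subst he; omega
      have h4 : j.1 - i.1 = (j.1 - (i.1 + 1)) + 1 := by omega
      rw [if_pos h1, if_pos h2, if_neg h3, h4, pow_succ]
      ring
  rw [Finset.sum_congr rfl (fun j _ => this j), Finset.sum_ite_eq' Finset.univ i lam]
  simp

lemma lower {a : ℝ} (ha : |a| < 1) {k : ℕ} (lam : Fin k → ℂ) :
    ∑ i : Fin k, ‖lam i‖ ^ 2 ≤ 4 * ∑ n ∈ Finset.range k, ‖Xv a lam n‖ ^ 2 := by
  have hstep : ∀ i : Fin k, ‖lam i‖ ^ 2 ≤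
      2 * ‖Xv a lam i.1‖ ^ 2 + 2 * ‖Xv a lam (i.1 + 1)‖ ^ 2 := by
    intro i
    have h1 : ‖lam i‖ ≤ ‖Xv a lam i.1‖ + ‖Xv a lam (i.1 + 1)‖ := by
      rw [lam_eq (a := a) lam i]
      refine (norm_sub_le _ _).trans ?_
      gcongr
      rw [norm_mul, Complex.norm_real, Real.norm_eq_abs]
      have h2 : 0 ≤ ‖Xv a lam (i.1+1)‖ := norm_nonneg _
      nlinarith [abs_nonneg a]
    nlinarith [norm_nonneg (lam i), norm_nonneg (Xv a lam i.1),
      norm_nonneg (Xv a lam (i.1+1)),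
      sq_nonneg (‖Xv a lam i.1‖ - ‖Xv a lam (i.1+1)‖)]
  have h2 : ∑ i : Fin k, ‖lam i‖ ^ 2 ≤
      ∑ n ∈ Finset.range k, (2 * ‖Xv a lam n‖ ^ 2 + 2 * ‖Xv a lam (n + 1)‖ ^ 2) := by
    rw [← Fin.sum_univ_eq_sum_range (fun n => 2 * ‖Xv a lam n‖ ^ 2 + 2 * ‖Xv a lam (n+1)‖ ^ 2) k]
    exact Finset.sum_le_sum fun i _ => hstep i
  refine h2.trans ?_
  rw [Finset.sum_add_distrib]
  have h3 : ∑ n ∈ Finset.range k, 2 * ‖Xv a lam (n + 1)‖ ^ 2 ≤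
      ∑ n ∈ Finset.range k, 2 * ‖Xv a lam n‖ ^ 2 := by
    have h4 : ∑ n ∈ Finset.range (k+1), 2 * ‖Xv a lam n‖ ^ 2
        = (∑ n ∈ Finset.range k, 2 * ‖Xv a lam (n+1)‖ ^ 2) + 2 * ‖Xv a lam 0‖ ^ 2 :=
      Finset.sum_range_succ' _ k
    have h5 : ∑ n ∈ Finset.range (k+1), 2 * ‖Xv a lam n‖ ^ 2
        = (∑ n ∈ Finset.range k, 2 * ‖Xv a lam n‖ ^ 2) + 2 * ‖Xv a lam k‖ ^ 2 :=
      Finset.sum_range_succ _ k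
    have h6 : Xv a lam k = 0 := Xv_zero_of_ge a lam (le_refl k)
    have h7 : (0:ℝ) ≤ 2 * ‖Xv a lam 0‖ ^ 2 := by positivity
    rw [h6] at h5
    simp only [norm_zero] at h5
    nlinarith
  have h8 : ∑ n ∈ Finset.range k, 2 * ‖Xv a lam n‖ ^ 2
      = 2 * ∑ n ∈ Finset.range k, ‖Xv a lam n‖ ^ 2 := by rw [Finset.mul_sum]
  nlinarith [h3, h8]


theorem statement18 (a : ℝ) (ha : |a| < 1) :
    ∃ B C : ℝ, 0 < B ∧ 0 < C ∧
      ∀ (k : ℕ) (lam : Fin k → ℂ), ∃ z : ℝ,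
        (∑ i : Fin k, ∑ j : Fin k,
          lam i * (starRingEnd ℂ) (lam j) *
            ((a ^ ((i : ℤ) - (j : ℤ)).natAbs : ℝ) : ℂ)) = (z : ℂ) ∧
        B * ∑ i : Fin k, ‖lam i‖ ^ 2 ≤ z ∧
        z ≤ C * ∑ i : Fin k, ‖lam i‖ ^ 2 := by
  have ha2 : a ^ 2 < 1 := by
    have h := sq_abs a
    nlinarith [abs_nonneg a, ha]
  have hainv : (0:ℝ) < (1 - |a|)⁻¹ := inv_pos.mpr (by linarith [ha])
  refine ⟨(1 - a ^ 2) / 4, (1 - |a|)⁻¹ ^ 2, by linarith, by positivity, ?_⟩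
  intro k lam
  refine ⟨∑ n ∈ Finset.range k, (if n = 0 then 1 else 1 - a ^ 2) * ‖Xv a lam n‖ ^ 2,
    key a k lam, ?_, ?_⟩
  · have hget : (1 - a ^ 2) * ∑ n ∈ Finset.range k, ‖Xv a lam n‖ ^ 2 ≤
        ∑ n ∈ Finset.range k, (if n = 0 then 1 else 1 - a ^ 2) * ‖Xv a lam n‖ ^ 2 := by
      rw [Finset.mul_sum]
      apply Finset.sum_le_sum
      intro n _
      have hx : (0:ℝ) ≤ ‖Xv a lam n‖ ^ 2 := sq_nonneg _
      split
      · nlinarith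
      · exact le_refl _
    have hlow := lower ha lam
    nlinarith [hget, hlow]
  · have hle : ∑ n ∈ Finset.range k, (if n = 0 then 1 else 1 - a ^ 2) * ‖Xv a lam n‖ ^ 2 ≤
        ∑ n ∈ Finset.range k, ‖Xv a lam n‖ ^ 2 := by
      apply Finset.sum_le_sum
      intro n _
      have hx : (0:ℝ) ≤ ‖Xv a lam n‖ ^ 2 := sq_nonneg _
      split
      · nlinarith
      · nlinarith
    exact hle.trans (upper ha lam)


end UCoxMasa
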